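/- For x, y ∈ ℝⁿ and p ≥ 1, the function φ(x) = (1/(p+1))‖x‖₂^{p+1} satisfies φ(x) ≥ φ(y) + ⟨∇φ(y), x − y⟩ + (1/2^{p−1})·φ(x − y), where ∇φ(y) = ‖y‖₂^{p−1} y. -/

import Mathlib

open scoped RealInnerProductSpace

open Real Set

private lemma rp_collapse {b : ℝ} (hb : 0 ≤ b) {q : ℝ} (hq : q ≠ 0) :
    b ^ (q - 1) * b = b ^ q := by
  rcases hb.eq_or_lt with h | h
  · simp [← h, Real.zero_rpow hq]
  · rw [← Real.rpow_add_one h.ne']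
    norm_num

private lemma superadd {u v q : ℝ} (hu : 0 ≤ u) (hv : 0 ≤ v) (hq : 1 ≤ q) :
    u ^ q + v ^ q ≤ (u + v) ^ q := by
  have hq0 : q ≠ 0 := by positivity
  have h1 : u ^ q ≤ u * (u + v) ^ (q - 1) := by
    calc u ^ q = u ^ (q-1) * u := (rp_collapse hu hq0).symm
    _ = u * u ^ (q-1) := by ring
    _ ≤ u * (u + v) ^ (q-1) :=
      mul_le_mul_of_nonneg_left (Real.rpow_le_rpow hu (by linarith) (by linarith)) hu
  have h2 : v ^ q ≤ v * (u + v) ^ (q - 1) := by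
    calc v ^ q = v ^ (q-1) * v := (rp_collapse hv hq0).symm
    _ = v * v ^ (q-1) := by ring
    _ ≤ v * (u + v) ^ (q-1) :=
      mul_le_mul_of_nonneg_left (Real.rpow_le_rpow hv (by linarith) (by linarith)) hv
  calc u ^ q + v ^ q ≤ u * (u+v)^(q-1) + v * (u+v)^(q-1) := add_le_add h1 h2
  _ = (u+v)^(q-1) * (u+v) := by ring
  _ = (u+v)^q := rp_collapse (by linarith) hq0

private lemma midconv {u v q : ℝ} (hu : 0 ≤ u) (hv : 0 ≤ v) (hq : 1 ≤ q) :
    2 ^ (1 - q) * (u + v) ^ q ≤ u ^ q + v ^ q := by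
  have h := (convexOn_rpow hq).2 (mem_Ici.2 hu) (mem_Ici.2 hv)
    (by norm_num : (0:ℝ) ≤ 1/2) (by norm_num : (0:ℝ) ≤ 1/2) (by norm_num)
  simp only [smul_eq_mul] at h
  rw [show (1/2 : ℝ) * u + (1/2 : ℝ) * v = (u + v)/2 by ring] at h
  rw [Real.div_rpow (by linarith) (by norm_num)] at h
  have h2q : (0:ℝ) < (2:ℝ) ^ q := Real.rpow_pos_of_pos two_pos q
  have hrw : (2:ℝ) ^ (1 - q) = 2 / 2 ^ q := by
    rw [Real.rpow_sub two_pos, Real.rpow_one]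
  rw [hrw, div_mul_eq_mul_div, div_le_iff₀ h2q] at *
  nlinarith [h2q]

private lemma mono_ici {f f' : ℝ → ℝ} {b : ℝ} (hd : ∀ x, HasDerivAt f (f' x) x)
    (h0 : ∀ x, b < x → 0 ≤ f' x) {a : ℝ} (hba : b ≤ a) : f b ≤ f a := by
  have hm : MonotoneOn f (Ici b) := by
    apply monotoneOn_of_deriv_nonneg (convex_Ici b)
      (fun x _ => (hd x).continuousAt.continuousWithinAt)
      (fun x _ => (hd x).differentiableAt.differentiableWithinAt)
    intro x hx
    rw [(hd x).deriv]
    exact h0 x (by simpa [interior_Ici] using hx)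
  exact hm (mem_Ici.2 le_rfl) hba hba

private lemma anti_icc {f f' : ℝ → ℝ} {b : ℝ} (hd : ∀ x, HasDerivAt f (f' x) x)
    (h0 : ∀ x, 0 < x → x < b → f' x ≤ 0) {a : ℝ} (ha : 0 ≤ a) (hab : a ≤ b) : f b ≤ f a := by
  have hm : AntitoneOn f (Icc 0 b) := by
    apply antitoneOn_of_deriv_nonpos (convex_Icc 0 b)
      (fun x _ => (hd x).continuousAt.continuousWithinAt)
      (fun x _ => (hd x).differentiableAt.differentiableWithinAt)
    intro x hx
    rw [interior_Icc] at hx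
    rw [(hd x).deriv]
    exact h0 x hx.1 hx.2
  exact hm (mem_Icc.2 ⟨ha, hab⟩) (mem_Icc.2 ⟨le_trans ha hab, le_rfl⟩) hab

private lemma key1 {q a b : ℝ} (hq : 2 ≤ q) (ha : 0 ≤ a) (hb : 0 ≤ b) :
    2 ^ (2 - q) * |a - b| ^ q ≤ a ^ q + (q - 1) * b ^ q - q * b ^ (q - 1) * a := by
  have hq1 : (1:ℝ) ≤ q := by linarith
  have hq0 : q ≠ 0 := by positivity
  have hc1 : (2:ℝ) ^ (2 - q) ≤ 1 :=
    Real.rpow_le_one_of_one_le_of_nonpos (by norm_num) (by linarith)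
  have hc0 : (0:ℝ) < 2 ^ (2 - q) := Real.rpow_pos_of_pos two_pos _
  set c : ℝ := 2 ^ (2 - q) with hcdef
  have hbb : b ^ (q - 1) * b = b ^ q := rp_collapse hb hq0
  rcases le_total b a with hba | hab
  · -- a ≥ b
    rw [abs_of_nonneg (by linarith)]
    set F : ℝ → ℝ := fun t => t ^ q - q * b ^ (q-1) * t - c * (t - b) ^ q with hF
    have hd : ∀ x, HasDerivAt F (q * x ^ (q-1) - q * b ^ (q-1) - c * (q * (x - b) ^ (q-1))) x := by
      intro x
      have h1 : HasDerivAt (fun t : ℝ => t ^ q) (q * x ^ (q-1)) x :=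
        Real.hasDerivAt_rpow_const (Or.inr hq1)
      have h2 : HasDerivAt (fun t : ℝ => q * b ^ (q-1) * t) (q * b ^ (q-1)) x := by
        simpa using (hasDerivAt_id x).const_mul (q * b ^ (q-1))
      have h3 : HasDerivAt (fun t : ℝ => (t - b) ^ q) (q * (x - b) ^ (q-1)) x := by
        have := (Real.hasDerivAt_rpow_const (x := x - b) (p := q) (Or.inr hq1)).comp x
          ((hasDerivAt_id x).sub_const b)
        simpa [Function.comp_def] using this
      exact (h1.sub h2).sub (h3.const_mul c)
    have h0 : ∀ x, b < x → 0 ≤ q * x ^ (q-1) - q * b ^ (q-1) - c * (q * (x - b) ^ (q-1)) := by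
      intro x hx
      have hsa := superadd hb (by linarith : (0:ℝ) ≤ x - b) (by linarith : 1 ≤ q - 1)
      rw [show b + (x - b) = x by ring] at hsa
      have hxb : (0:ℝ) ≤ (x - b) ^ (q-1) := Real.rpow_nonneg (by linarith) _
      have : c * (x - b) ^ (q-1) ≤ (x - b) ^ (q-1) := by nlinarith
      have hqpos : (0:ℝ) < q := by linarith
      nlinarith
    have := mono_ici hd h0 hba
    simp only [hF] at this
    rw [sub_self, Real.zero_rpow hq0] at this
    nlinarith [this, hbb]
  · -- a ≤ b
    rw [abs_of_nonpos (by linarith), neg_sub]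
    set F : ℝ → ℝ := fun t => t ^ q - q * b ^ (q-1) * t - c * (b - t) ^ q with hF
    have hd : ∀ x, HasDerivAt F (q * x ^ (q-1) - q * b ^ (q-1) + c * (q * (b - x) ^ (q-1))) x := by
      intro x
      have h1 : HasDerivAt (fun t : ℝ => t ^ q) (q * x ^ (q-1)) x :=
        Real.hasDerivAt_rpow_const (Or.inr hq1)
      have h2 : HasDerivAt (fun t : ℝ => q * b ^ (q-1) * t) (q * b ^ (q-1)) x := by
        simpa using (hasDerivAt_id x).const_mul (q * b ^ (q-1))
      have h3 : HasDerivAt (fun t : ℝ => (b - t) ^ q) (-(q * (b - x) ^ (q-1))) x := by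
        have := (Real.hasDerivAt_rpow_const (x := b - x) (p := q) (Or.inr hq1)).comp x
          ((hasDerivAt_const x b).sub (hasDerivAt_id x))
        simpa [Function.comp_def] using this
      have h4 := (h1.sub h2).sub (h3.const_mul c)
      have heq : q * x ^ (q-1) - q * b ^ (q-1) + c * (q * (b - x) ^ (q-1))
          = q * x ^ (q-1) - q * b ^ (q-1) - c * (-(q * (b - x) ^ (q-1))) := by ring
      rw [heq]
      exact h4
    have h0 : ∀ x, 0 < x → x < b → q * x ^ (q-1) - q * b ^ (q-1) + c * (q * (b - x) ^ (q-1)) ≤ 0 := by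
      intro x hx0 hxb
      have hsa := superadd (le_of_lt hx0) (by linarith : (0:ℝ) ≤ b - x) (by linarith : 1 ≤ q - 1)
      rw [show x + (b - x) = b by ring] at hsa
      have hxb' : (0:ℝ) ≤ (b - x) ^ (q-1) := Real.rpow_nonneg (by linarith) _
      have : c * (b - x) ^ (q-1) ≤ (b - x) ^ (q-1) := by nlinarith
      have hqpos : (0:ℝ) < q := by linarith
      nlinarith
    have := anti_icc hd h0 ha hab
    simp only [hF] at this
    rw [sub_self, Real.zero_rpow hq0] at this
    nlinarith [this, hbb]

private lemma key2 {q a b : ℝ} (hq : 2 ≤ q) (ha : 0 ≤ a) (hb : 0 ≤ b) :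
    2 ^ (2 - q) * (a + b) ^ q ≤ a ^ q + (q - 1) * b ^ q + q * b ^ (q - 1) * a := by
  have hq1 : (1:ℝ) ≤ q := by linarith
  have hq0 : q ≠ 0 := by positivity
  have hc1 : (2:ℝ) ^ (2 - q) ≤ 1 :=
    Real.rpow_le_one_of_one_le_of_nonpos (by norm_num) (by linarith)
  have hc0 : (0:ℝ) < 2 ^ (2 - q) := Real.rpow_pos_of_pos two_pos _
  set c : ℝ := 2 ^ (2 - q) with hcdef
  set F : ℝ → ℝ := fun t => t ^ q + q * b ^ (q-1) * t - c * (t + b) ^ q with hF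
  have hd : ∀ x, HasDerivAt F (q * x ^ (q-1) + q * b ^ (q-1) - c * (q * (x + b) ^ (q-1))) x := by
    intro x
    have h1 : HasDerivAt (fun t : ℝ => t ^ q) (q * x ^ (q-1)) x :=
      Real.hasDerivAt_rpow_const (Or.inr hq1)
    have h2 : HasDerivAt (fun t : ℝ => q * b ^ (q-1) * t) (q * b ^ (q-1)) x := by
      simpa using (hasDerivAt_id x).const_mul (q * b ^ (q-1))
    have h3 : HasDerivAt (fun t : ℝ => (t + b) ^ q) (q * (x + b) ^ (q-1)) x := by
      have := (Real.hasDerivAt_rpow_const (x := x + b) (p := q) (Or.inr hq1)).comp x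
        ((hasDerivAt_id x).add_const b)
      simpa [Function.comp_def] using this
    exact (h1.add h2).sub (h3.const_mul c)
  have h0 : ∀ x, 0 < x → 0 ≤ q * x ^ (q-1) + q * b ^ (q-1) - c * (q * (x + b) ^ (q-1)) := by
    intro x hx
    have hmc := midconv (le_of_lt hx) hb (by linarith : 1 ≤ q - 1)
    rw [show (1 : ℝ) - (q - 1) = 2 - q by ring] at hmc
    have hqpos : (0:ℝ) < q := by linarith
    nlinarith
  have := mono_ici hd h0 ha
  simp only [hF] at this
  rw [Real.zero_rpow hq0] at this
  norm_num at this
  have hbq : (0:ℝ) ≤ b ^ q := Real.rpow_nonneg hb _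
  nlinarith [this, mul_le_mul_of_nonneg_right hc1 hbq, hbq]

/-- Uniform convexity inequality for `φ(x) = (1/(p+1))‖x‖₂^{p+1}` on `ℝⁿ` with
Euclidean norm: `φ(x) ≥ φ(y) + ⟨∇φ(y), x − y⟩ + 2^{1−p} φ(x − y)`, where
`∇φ(y) = ‖y‖^{p−1} y`. -/
theorem stmt0 (n : ℕ) (p : ℝ) (hp : 1 ≤ p)
    (x y : EuclideanSpace ℝ (Fin n)) :
    (1 / (p + 1)) * ‖x‖ ^ (p + 1) ≥
      (1 / (p + 1)) * ‖y‖ ^ (p + 1)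
        + ⟪(‖y‖ ^ (p - 1) : ℝ) • y, x - y⟫
        + (1 / 2 ^ (p - 1)) * ((1 / (p + 1)) * ‖x - y‖ ^ (p + 1)) := by
  have hq2 : (2:ℝ) ≤ p + 1 := by linarith
  have hq0 : (0:ℝ) < p + 1 := by linarith
  have hqne : p + 1 ≠ 0 := ne_of_gt hq0
  have hA0 : (0:ℝ) ≤ ‖x‖ := norm_nonneg x
  have hB0 : (0:ℝ) ≤ ‖y‖ := norm_nonneg y
  have hc0 : (0:ℝ) < 2 ^ (2 - (p+1)) := Real.rpow_pos_of_pos two_pos _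
  have hc1 : (2:ℝ) ^ (2 - (p+1)) ≤ 1 :=
    Real.rpow_le_one_of_one_le_of_nonpos (by norm_num) (by linarith)
  have hcval : 1 / (2:ℝ) ^ (p - 1) = (2:ℝ) ^ (2 - (p + 1)) := by
    rw [one_div, ← Real.rpow_neg (by norm_num : (0:ℝ) ≤ 2)]
    congr 1; ring
  have hinner : ⟪(‖y‖ ^ (p - 1) : ℝ) • y, x - y⟫ = ‖y‖^(p-1) * (⟪x, y⟫ - ‖y‖*‖y‖) := by
    rw [real_inner_smul_left, inner_sub_right, real_inner_self_eq_norm_mul_norm,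
      real_inner_comm]
  have hmain : ‖y‖^(p+1) + (p+1) * (‖y‖^(p-1) * (⟪x,y⟫ - ‖y‖*‖y‖))
      + 2^(2-(p+1)) * ‖x - y‖^(p+1) ≤ ‖x‖^(p+1) := by
    by_cases hy0 : y = 0
    · simp only [hy0, norm_zero, inner_zero_right, sub_zero, mul_zero, zero_mul, sub_self]
      rw [Real.zero_rpow hqne]
      have hxq : (0:ℝ) ≤ ‖x‖^(p+1) := Real.rpow_nonneg hA0 _
      nlinarith [hxq]
    · have hB : (0:ℝ) < ‖y‖ := norm_pos_iff.2 hy0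
      have hBp : ‖y‖^(p-1) * ‖y‖ = ‖y‖^p := rp_collapse hB0 (by linarith : p ≠ 0)
      have hBq : ‖y‖^p * ‖y‖ = ‖y‖^(p+1) := by
        have h := rp_collapse hB0 hqne (q := p+1)
        rwa [show p + 1 - 1 = p by ring] at h
      by_cases hx0 : x = 0
      · simp only [hx0, norm_zero, inner_zero_left, zero_sub, norm_neg, zero_mul, zero_sub]
        rw [Real.zero_rpow hqne]
        have hk := key1 (q := p+1) (a := 0) (b := ‖y‖) hq2 le_rfl hB0
        rw [show p + 1 - 1 = p by ring] at hk
        rw [Real.zero_rpow hqne, zero_sub, abs_neg, abs_of_nonneg hB0] at hk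
        have hexp : ‖y‖^(p-1) * -(‖y‖*‖y‖) = -‖y‖^(p+1) := by
          calc ‖y‖^(p-1) * -(‖y‖*‖y‖) = -((‖y‖^(p-1) * ‖y‖) * ‖y‖) := by ring
          _ = -(‖y‖^p * ‖y‖) := by rw [hBp]
          _ = -‖y‖^(p+1) := by rw [hBq]
        rw [hexp]
        nlinarith [hk]
      · have hA : (0:ℝ) < ‖x‖ := norm_pos_iff.2 hx0
        have hAB : (0:ℝ) < ‖x‖ * ‖y‖ := mul_pos hA hB
        set A := ‖x‖ with hAdef
        set B := ‖y‖ with hBdef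
        set s := ⟪x, y⟫ with hsdef
        set r := ‖x - y‖ with hrdef
        have hr0 : (0:ℝ) ≤ r := norm_nonneg _
        have hCS : |s| ≤ A * B := abs_real_inner_le_norm x y
        obtain ⟨hCS1, hCS2⟩ := abs_le.1 hCS
        set l : ℝ := (A*B + s)/(2*(A*B)) with hldef
        have hl0 : 0 ≤ l := div_nonneg (by linarith) (by linarith)
        have hl1 : l ≤ 1 := by
          rw [hldef, div_le_one (by linarith)]; linarith
        have hsl : s = (2*l - 1)*(A*B) := by
          rw [hldef]; field_simp; ring
        have hr2 : r^2 = A^2 - 2*s + B^2 := norm_sub_sq_real x y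
        have he : (1:ℝ) ≤ (p+1)/2 := by linarith
        have harg : l*((A-B)^2) + (1-l)*((A+B)^2) = r^2 := by
          rw [hr2, hldef]; field_simp; ring
        have hconv := (convexOn_rpow he).2 (mem_Ici.2 (sq_nonneg (A-B)))
          (mem_Ici.2 (sq_nonneg (A+B))) hl0 (by linarith : (0:ℝ) ≤ 1 - l)
          (by ring : l + (1 - l) = 1)
        simp only [smul_eq_mul] at hconv
        rw [harg] at hconv
        have hsq : ∀ t : ℝ, 0 ≤ t → (t^2)^((p+1)/2) = t^(p+1) := by
          intro t ht
          rw [← Real.rpow_natCast t 2, ← Real.rpow_mul ht]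
          congr 1
          push_cast; ring
        have h1 : ((A-B)^2)^((p+1)/2) = |A-B|^(p+1) := by
          rw [← sq_abs]; exact hsq _ (abs_nonneg _)
        have h2 : ((A+B)^2)^((p+1)/2) = (A+B)^(p+1) := hsq _ (by linarith)
        rw [h1, h2, hsq r hr0] at hconv
        have hk1 := key1 (q := p+1) (a := A) (b := B) hq2 hA0 hB0
        have hk2 := key2 (q := p+1) (a := A) (b := B) hq2 hA0 hB0
        rw [show p + 1 - 1 = p by ring] at hk1 hk2
        have hm1 := mul_le_mul_of_nonneg_left hk1 hl0
        have hm2 := mul_le_mul_of_nonneg_left hk2 (by linarith : (0:ℝ) ≤ 1 - l)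
        have hcr := mul_le_mul_of_nonneg_left hconv (le_of_lt hc0)
        have hce : (2:ℝ)^(2-(p+1)) * (l * |A-B|^(p+1) + (1-l) * (A+B)^(p+1))
            = l * (2^(2-(p+1)) * |A-B|^(p+1)) + (1-l) * (2^(2-(p+1)) * (A+B)^(p+1)) := by
          ring
        rw [hsl]
        have hBterm : B^(p-1)*((2*l - 1)*(A*B) - B*B) = (2*l - 1)*A*B^p - B^(p+1) := by
          calc B^(p-1)*((2*l - 1)*(A*B) - B*B)
              = (2*l - 1)*A*(B^(p-1)*B) - (B^(p-1)*B)*B := by ring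
          _ = (2*l - 1)*A*B^p - B^p*B := by rw [hBp]
          _ = (2*l - 1)*A*B^p - B^(p+1) := by rw [hBq]
        rw [hBterm]
        linarith [hm1, hm2, hcr, hce.ge, hce.le]
  have h2 := mul_le_mul_of_nonneg_left hmain (by positivity : (0:ℝ) ≤ 1/(p+1))
  have hdist : 1/(p+1) * (‖y‖^(p+1) + (p+1)*(‖y‖^(p-1)*(⟪x,y⟫ - ‖y‖*‖y‖))
        + 2^(2-(p+1))*‖x - y‖^(p+1))
      = 1/(p+1)*‖y‖^(p+1) + ‖y‖^(p-1)*(⟪x,y⟫ - ‖y‖*‖y‖)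
        + 2^(2-(p+1))*(1/(p+1)*‖x - y‖^(p+1)) := by
    field_simp
  rw [hdist] at h2
  rw [ge_iff_le, hinner, hcval]
  linarith [h2]
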